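/- (Unfolding of the recursion, eq. (30).) For all integers N ≥ 2 and 2 ≤ i ≤ N, the coefficients satisfy a_i(N+1) = Π_{l=0}^{N-i} (2N - 2l - i) + Σ_{l=0}^{N-i} ⟨2N-i⟩_l · a_{i-1}(N-l). -/
import Mathlib


/-- The coefficients `a_i(N)` defined by `a_1(1) = 1`, `a_1(N+1) = (2N-1)·a_1(N)`,
`a_{N+1}(N+1) = a_N(N)`, and `a_i(N+1) = (2N-i)·a_i(N) + a_{i-1}(N)` for `2 ≤ i ≤ N`
(and `a_i(N) = 0` when `i = 0` or `i > N`). -/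
def legA : ℕ → ℕ → ℤ
  | _, 0 => 0
  | i, 1 => if i = 1 then 1 else 0
  | i, (N + 2) => if i = 0 ∨ N + 2 < i then 0
      else (2 * (N + 1) - (i : ℤ)) * legA i (N + 1) + legA (i - 1) (N + 1)

/-- `⟨m⟩_l = m(m-2)(m-4)···(m-2(l-1))`, with `⟨m⟩_0 = 1`. -/
def descDouble (m : ℤ) (l : ℕ) : ℤ := ∏ j ∈ Finset.range l, (m - 2 * j)

lemma legA_rec (i N : ℕ) (h1 : 1 ≤ i) (h2 : i ≤ N + 2) :
    legA i (N + 2) = (2 * (N + 1) - (i : ℤ)) * legA i (N + 1) + legA (i - 1) (N + 1) := by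
  rw [legA, if_neg (by omega)]

lemma legA_diag : ∀ N, 1 ≤ N → legA N N = 1 := by
  intro N
  induction N with
  | zero => omega
  | succ M ih =>
    intro _
    match M, ih with
    | 0, _ => simp [legA]
    | M + 1, ih =>
      rw [legA_rec (M + 2) M (by omega) (by omega)]
      have h0 : legA (M + 2) (M + 1) = 0 := by
        match M with
        | 0 => simp [legA]
        | M + 1 => rw [legA, if_pos (by omega)]
      rw [h0]; norm_num; exact ih (by omega)

lemma descDouble_succ' (m : ℤ) (l : ℕ) :
    descDouble m (l + 1) = m * (descDouble (m - 2) l) := by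
  rw [descDouble, Finset.prod_range_succ']
  simp only [Nat.cast_zero, mul_zero, sub_zero, descDouble]
  rw [mul_comm]
  congr 1
  apply Finset.prod_congr rfl
  intro j _
  push_cast; ring

/-- Unfolding of the recursion (eq. (30)): for `N ≥ 2` and `2 ≤ i ≤ N`,
`a_i(N+1) = Π_{l=0}^{N-i} (2N - 2l - i) + Σ_{l=0}^{N-i} ⟨2N-i⟩_l · a_{i-1}(N-l)`. -/
theorem legA_unfold (N i : ℕ) (hN : 2 ≤ N) (hi2 : 2 ≤ i) (hiN : i ≤ N) :
    legA i (N + 1)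
      = ∏ l ∈ Finset.range (N - i + 1), ((2 * N : ℤ) - 2 * l - i)
        + ∑ l ∈ Finset.range (N - i + 1), descDouble ((2 * N : ℤ) - i) l * legA (i - 1) (N - l) := by
  clear hN
  obtain ⟨j, rfl⟩ : ∃ j, i = j + 2 := ⟨i - 2, by omega⟩
  obtain ⟨d, rfl⟩ : ∃ d, N = j + 2 + d := ⟨N - (j + 2), by omega⟩
  clear hi2 hiN
  induction d with
  | zero =>
    rw [show j + 2 + 0 + 1 = (j + 1) + 2 from by ring]
    rw [legA_rec (j + 2) (j + 1) (by omega) (by omega)]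
    rw [legA_diag (j + 2) (by omega)]
    simp only [show j + 2 + 0 - (j + 2) + 1 = 1 from by omega, Finset.prod_range_one,
      Finset.sum_range_one, descDouble, Finset.prod_range_zero]
    simp only [show j + 2 - 1 = j + 1 from rfl, show j + 2 + 0 - 0 = j + 2 from by omega]
    push_cast
    ring
  | succ d ih =>
    rw [show j + 2 + (d + 1) + 1 = (j + d + 2) + 2 from by ring]
    rw [legA_rec (j + 2) (j + d + 2) (by omega) (by omega)]
    rw [show j + d + 2 + 1 = j + 2 + d + 1 from by ring, ih]
    rw [show j + 2 + (d + 1) - (j + 2) + 1 = (d + 1) + 1 from by omega,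
        show j + 2 + d - (j + 2) + 1 = d + 1 from by omega]
    simp only [show j + 2 - 1 = j + 1 from rfl]
    conv_rhs => rw [Finset.prod_range_succ', Finset.sum_range_succ']
    have hprod : ∏ l ∈ Finset.range (d + 1),
          ((2 * ((j + 2 + (d + 1) : ℕ) : ℤ)) - 2 * ((l + 1 : ℕ) : ℤ) - ((j + 2 : ℕ) : ℤ))
        = ∏ l ∈ Finset.range (d + 1), ((2 * ((j + 2 + d : ℕ) : ℤ)) - 2 * (l : ℤ) - ((j + 2 : ℕ) : ℤ)) := by
      apply Finset.prod_congr rfl; intro l _; push_cast; ring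
    have hsum : ∑ l ∈ Finset.range (d + 1),
          descDouble ((2 * ((j + 2 + (d + 1) : ℕ) : ℤ)) - ((j + 2 : ℕ) : ℤ)) (l + 1)
            * legA (j + 1) (j + 2 + (d + 1) - (l + 1))
        = (2 * ((j + 2 + (d + 1) : ℕ) : ℤ) - ((j + 2 : ℕ) : ℤ)) * ∑ l ∈ Finset.range (d + 1),
          descDouble ((2 * ((j + 2 + d : ℕ) : ℤ)) - ((j + 2 : ℕ) : ℤ)) l * legA (j + 1) (j + 2 + d - l) := by
      rw [Finset.mul_sum]
      apply Finset.sum_congr rfl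
      intro l _
      rw [descDouble_succ', show j + 2 + (d + 1) - (l + 1) = j + 2 + d - l from by omega,
        show (2 * ((j + 2 + (d + 1) : ℕ) : ℤ)) - ((j + 2 : ℕ) : ℤ) - 2
          = (2 * ((j + 2 + d : ℕ) : ℤ)) - ((j + 2 : ℕ) : ℤ) from by push_cast; ring]
      ring
    rw [hprod, hsum]
    simp only [descDouble, Finset.prod_range_zero, Nat.cast_zero, mul_zero, sub_zero,
      show j + 2 + (d + 1) - 0 = j + 2 + d + 1 from by omega]
    push_cast
    ring
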